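/- arXiv:2003.00589 — 2 statements merged into one kernel-verified Lean document; each statement's English description precedes it below -/
import Mathlib

section
/- Define ℓ_n by ℓ_0 = 3 and ℓ_{n+1} = 1 + Σ_{j=0}^{n} (-1)^j * binom(ℓ_{n-j}, j+2), and set ρ_n := (log₂(ℓ_{n+1}) - 1)/2^n. Then ρ_n is strictly decreasing in n and converges to a limit ρ ≥ 0, and for all n ≥ 4, ρ_n ≥ ρ ≥ ρ_n - 1/(2^(n-3) · ln 2 · √ℓ_{n+1}). -/
lemma pow_sub_le_descFactorial (a : ℕ) : ∀ k : ℕ, (a - k) ^ k ≤ a.descFactorial k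
  | 0 => by simp
  | (k+1) => by
    rw [Nat.descFactorial_succ, pow_succ]
    have h1 : (a - (k+1)) ^ k ≤ (a - k) ^ k :=
      Nat.pow_le_pow_left (by omega) k
    have h2 : (a - k) ^ k ≤ a.descFactorial k := pow_sub_le_descFactorial a k
    calc (a - (k+1)) ^ k * (a - (k+1)) ≤ a.descFactorial k * (a - k) :=
          Nat.mul_le_mul (le_trans h1 h2) (by omega)
      _ = (a - k) * a.descFactorial k := Nat.mul_comm _ _

lemma choose_step {b a : ℕ} (hb : 12 ≤ b) (hba : b ^ 2 ≤ 3 * a) {k : ℕ} (hk : 2 ≤ k) :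
    b.choose (k + 1) ≤ a.choose k := by
  rcases le_or_gt b k with hbk | hkb
  · rw [Nat.choose_eq_zero_of_lt (by omega)]; exact Nat.zero_le _
  have key : b ^ (k+1) ≤ (k+1) * (a - k) ^ k := by
    obtain ⟨d, rfl⟩ : ∃ d, b = d + 12 := ⟨b - 12, by omega⟩
    obtain ⟨m, rfl⟩ : ∃ m, k = m + 2 := ⟨k - 2, by omega⟩
    set e := a - (m + 2) with he
    have h3 : (d + 12) * (d + 9) ≤ 3 * e := by
      have hsq : (d+12)^2 = d*d + 24*d + 144 := by ring
      have : d*d + 24*d + 144 ≤ 3*a := by omega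
      have hm : m + 2 < d + 12 := hkb
      have : (d+12)*(d+9) = d*d+21*d+108 := by ring
      omega
    have h4 : ((d+12) * (d+9)) ^ (m+2) ≤ (3 * e) ^ (m+2) := Nat.pow_le_pow_left h3 _
    have h6 : 9 ^ m ≤ (d + 9) ^ m := Nat.pow_le_pow_left (by omega) m
    have h5 : (d+12) * 3 ^ (m+2) ≤ (m + 3) * (d + 9) ^ (m+2) := by
      calc (d+12) * 3 ^ (m+2) = (3 * (d+12)) * 3 * 3 ^ m := by ring
        _ = (9 * (d+12)) * 3 ^ m := by ring
        _ ≤ (3 * (d+9)^2) * 9 ^ m := Nat.mul_le_mul (by nlinarith) (Nat.pow_le_pow_left (by norm_num) m)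
        _ = (d+9)^2 * 3 * 9 ^ m := by ring
        _ ≤ (d+9)^2 * 3 * (d+9) ^ m := by
            exact Nat.mul_le_mul_left _ h6
        _ = 3 * (d+9) ^ (m+2) := by ring
        _ ≤ (m + 3) * (d + 9) ^ (m+2) := Nat.mul_le_mul_right _ (by omega)
    have h10 : 3 ^ (m+2) * (d+12) ^ (m+3) ≤ 3 ^ (m+2) * ((m+3) * e ^ (m+2)) := by
      calc 3 ^ (m+2) * (d+12) ^ (m+3) = ((d+12) * 3^(m+2)) * (d+12)^(m+2) := by ring
        _ ≤ ((m+3) * (d+9)^(m+2)) * (d+12)^(m+2) := Nat.mul_le_mul_right _ h5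
        _ = (m+3) * ((d+12) * (d+9))^(m+2) := by rw [Nat.mul_pow]; ring
        _ ≤ (m+3) * (3 * e)^(m+2) := Nat.mul_le_mul_left _ h4
        _ = 3 ^ (m+2) * ((m+3) * e^(m+2)) := by rw [Nat.mul_pow]; ring
    have := Nat.le_of_mul_le_mul_left h10 (Nat.pow_pos (by norm_num))
    simpa [show m + 2 + 1 = m + 3 from rfl] using this
  have hfac : (k+1).factorial * b.choose (k+1) ≤ (k+1).factorial * a.choose k := by
    have e1 : (k+1).factorial * b.choose (k+1) = b.descFactorial (k+1) :=
      (Nat.descFactorial_eq_factorial_mul_choose b (k+1)).symm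
    have e2 : (k+1).factorial * a.choose k = (k+1) * (k.factorial * a.choose k) := by
      rw [Nat.factorial_succ]; ring
    rw [e1, e2, ← Nat.descFactorial_eq_factorial_mul_choose a k]
    calc b.descFactorial (k+1) ≤ b ^ (k+1) := Nat.descFactorial_le_pow b (k+1)
      _ ≤ (k+1) * (a - k)^k := key
      _ ≤ (k+1) * a.descFactorial k := Nat.mul_le_mul_left _ (pow_sub_le_descFactorial a k)
  exact Nat.le_of_mul_le_mul_left hfac (Nat.factorial_pos (k+1))

lemma alt_bounds : ∀ (N : ℕ) (a : ℕ → ℤ), (∀ j, 0 ≤ a j) → (∀ j, a (j+1) ≤ a j) →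
    0 ≤ ∑ j ∈ Finset.range N, (-1:ℤ)^j * a j ∧ ∑ j ∈ Finset.range N, (-1:ℤ)^j * a j ≤ a 0
  | 0, a, h0, _ => by simp [h0 0]
  | (N+1), a, h0, hm => by
    have ih := alt_bounds N (fun j => a (j+1)) (fun j => h0 (j+1)) (fun j => hm (j+1))
    have hs : ∑ j ∈ Finset.range (N+1), (-1:ℤ)^j * a j
        = a 0 - ∑ j ∈ Finset.range N, (-1:ℤ)^j * a (j+1) := by
      rw [Finset.sum_range_succ' (fun j => (-1:ℤ)^j * a j) N]
      have : ∀ i, (-1:ℤ)^(i+1) * a (i+1) = -((-1:ℤ)^i * a (i+1)) := by intro i; ring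
      simp only [this, Finset.sum_neg_distrib]
      ring
    rw [hs]
    constructor
    · have := ih.2
      have := hm 0
      linarith
    · linarith [ih.1]

lemma two_mul_choose_two (m : ℕ) : 2 * m.choose 2 = m * (m - 1) := by
  have := Nat.choose_two_right m
  rw [this]
  have : 2 ∣ m * (m-1) := by
    rcases Nat.even_or_odd m with h | h
    · exact Dvd.dvd.mul_right h.two_dvd _
    · rcases m with _ | m
      · simp
      · simp only [Nat.succ_sub_one]
        exact Dvd.dvd.mul_left (Nat.Odd.sub_odd h odd_one).two_dvd _
  omega

lemma six_choose_three_le (c : ℕ) : 6 * c.choose 3 ≤ c ^ 3 := by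
  have h1 : (Nat.factorial 3) * c.choose 3 = c.descFactorial 3 :=
    (Nat.descFactorial_eq_factorial_mul_choose c 3).symm
  have h2 : c.descFactorial 3 ≤ c ^ 3 := Nat.descFactorial_le_pow c 3
  simpa [Nat.factorial] using h1 ▸ h2

section
variable (ℓ : ℕ → ℤ) (h0 : ℓ 0 = 3)
  (hrec : ∀ n : ℕ, ℓ (n + 1) =
      1 + ∑ j ∈ Finset.range (n + 1), (-1) ^ j * ((ℓ (n - j)).toNat.choose (j + 2) : ℤ))

include h0 hrec

lemma lval1 : ℓ 1 = 4 := by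
  have h := hrec 0
  simp [Finset.sum_range_succ, h0] at h
  norm_num at h
  exact h

lemma lval2 : ℓ 2 = 6 := by
  have h := hrec 1
  have h1 : ℓ 1 = 4 := lval1 ℓ h0 hrec
  simp [Finset.sum_range_succ, h0, h1] at h
  norm_num at h
  exact h

lemma lval3 : ℓ 3 = 12 := by
  have h := hrec 2
  have h1 : ℓ 1 = 4 := lval1 ℓ h0 hrec
  have h2 : ℓ 2 = 6 := lval2 ℓ h0 hrec
  simp [Finset.sum_range_succ, h0, h1, h2] at h
  norm_num at h
  exact h

lemma lval4 : ℓ 4 = 48 := by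
  have h := hrec 3
  have h1 : ℓ 1 = 4 := lval1 ℓ h0 hrec
  have h2 : ℓ 2 = 6 := lval2 ℓ h0 hrec
  have h3 : ℓ 3 = 12 := lval3 ℓ h0 hrec
  simp [Finset.sum_range_succ, h0, h1, h2, h3] at h
  norm_num at h
  exact h

lemma lval5 : ℓ 5 = 924 := by
  have h := hrec 4
  have h1 : ℓ 1 = 4 := lval1 ℓ h0 hrec
  have h2 : ℓ 2 = 6 := lval2 ℓ h0 hrec
  have h3 : ℓ 3 = 12 := lval3 ℓ h0 hrec
  have h4 : ℓ 4 = 48 := lval4 ℓ h0 hrec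
  simp [Finset.sum_range_succ, h0, h1, h2, h3, h4] at h
  norm_num [Nat.choose] at h
  exact h

end

section
variable (ℓ : ℕ → ℤ) (h0 : ℓ 0 = 3)
  (hrec : ∀ n : ℕ, ℓ (n + 1) =
      1 + ∑ j ∈ Finset.range (n + 1), (-1) ^ j * ((ℓ (n - j)).toNat.choose (j + 2) : ℤ))

include h0 hrec

lemma sum_bound (n : ℕ) (hn : 2 ≤ n)
    (hK : ∀ j, j < n → (((ℓ (n - (j+1))).toNat.choose (j + 3) : ℤ)) ≤ ((ℓ (n - j)).toNat.choose (j + 2) : ℤ)) :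
    1 + ((ℓ n).toNat.choose 2 : ℤ) - ((ℓ (n-1)).toNat.choose 3 : ℤ) ≤ ℓ (n+1) ∧
      ℓ (n+1) ≤ 1 + ((ℓ n).toNat.choose 2 : ℤ) := by
  set a : ℕ → ℤ := fun j => ((ℓ (n - j)).toNat.choose (j + 2) : ℤ) with ha
  have h0a : ∀ j, 0 ≤ a j := fun j => Int.natCast_nonneg _
  have hm : ∀ j, a (j+1) ≤ a j := by
    intro j
    rcases lt_or_ge j n with hj | hj
    · exact hK j hj
    · have hz : n - (j+1) = 0 := by omega
      have : a (j+1) = 0 := by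
        simp only [ha, hz, h0]
        norm_num
        exact Nat.choose_eq_zero_of_lt (by omega)
      rw [this]; exact h0a j
  have hb := alt_bounds n (fun j => a (j+1)) (fun j => h0a (j+1)) (fun j => hm (j+1))
  have hs : ∑ j ∈ Finset.range (n+1), (-1:ℤ)^j * a j
      = a 0 - ∑ j ∈ Finset.range n, (-1:ℤ)^j * a (j+1) := by
    rw [Finset.sum_range_succ' (fun j => (-1:ℤ)^j * a j) n]
    have : ∀ i, (-1:ℤ)^(i+1) * a (i+1) = -((-1:ℤ)^i * a (i+1)) := by intro i; ring
    simp only [this, Finset.sum_neg_distrib]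
    ring
  have hr : ℓ (n+1) = 1 + ∑ j ∈ Finset.range (n+1), (-1:ℤ)^j * a j := hrec n
  have ha0 : a 0 = ((ℓ n).toNat.choose 2 : ℤ) := by simp [ha]
  have ha1 : a 1 = ((ℓ (n-1)).toNat.choose 3 : ℤ) := by simp [ha]
  rw [hr, hs, ha0]
  constructor
  · rw [← ha1]; linarith [hm 0, hb.2, ha0, ha1]
  · linarith [hb.1]

set_option maxHeartbeats 1000000 in
lemma inv : ∀ n : ℕ, 3 ≤ ℓ n ∧ (3 ≤ n → 12 ≤ ℓ n) ∧ (ℓ n)^2 ≤ 3 * ℓ (n+1) ∧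
    ∀ k, 2 ≤ k → (ℓ n).toNat.choose (k+1) ≤ (ℓ (n+1)).toNat.choose k := by
  have h1 : ℓ 1 = 4 := lval1 ℓ h0 hrec
  have h2 : ℓ 2 = 6 := lval2 ℓ h0 hrec
  have h3 : ℓ 3 = 12 := lval3 ℓ h0 hrec
  have h4 : ℓ 4 = 48 := lval4 ℓ h0 hrec
  intro n
  induction n using Nat.strong_induction_on with
  | _ n IH =>
    rcases lt_or_ge n 4 with hn4 | hn4
    · have small : ∀ (u v : ℤ) (N : ℕ), ℓ n = u → ℓ (n+1) = v → 3 ≤ u → (3 ≤ n → 12 ≤ u) →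
          u^2 ≤ 3*v → u.toNat = N →
          (∀ k, 2 ≤ k → N.choose (k+1) ≤ v.toNat.choose k) →
          (3 ≤ ℓ n ∧ (3 ≤ n → 12 ≤ ℓ n) ∧ (ℓ n)^2 ≤ 3 * ℓ (n+1) ∧
            ∀ k, 2 ≤ k → (ℓ n).toNat.choose (k+1) ≤ (ℓ (n+1)).toNat.choose k) := by
        rintro u v N hu hv h3u h12u hsq hN hch
        exact ⟨hu ▸ h3u, fun h => hu ▸ h12u h, by rw [hu, hv]; exact hsq,
          by rw [hu, hv, hN]; exact hch⟩
      interval_cases n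
      · refine small 3 4 3 h0 h1 (by norm_num) (by omega) (by norm_num) (by decide) ?_
        intro k hk
        rcases le_or_gt 3 k with h | h
        · rw [Nat.choose_eq_zero_of_lt (by omega)]; exact Nat.zero_le _
        · interval_cases k <;> decide
      · refine small 4 6 4 h1 h2 (by norm_num) (by omega) (by norm_num) (by decide) ?_
        intro k hk
        rcases le_or_gt 4 k with h | h
        · rw [Nat.choose_eq_zero_of_lt (by omega)]; exact Nat.zero_le _
        · interval_cases k <;> decide
      · refine small 6 12 6 h2 h3 (by norm_num) (by omega) (by norm_num) (by decide) ?_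
        intro k hk
        rcases le_or_gt 6 k with h | h
        · rw [Nat.choose_eq_zero_of_lt (by omega)]; exact Nat.zero_le _
        · interval_cases k <;> decide
      · refine small 12 48 12 h3 h4 (by norm_num) (by omega) (by norm_num) (by decide) ?_
        intro k hk
        exact choose_step (by norm_num) (by decide) hk
    · obtain ⟨p, rfl⟩ : ∃ p, n = p + 4 := ⟨n - 4, by omega⟩
      -- general step
      have hc12 : 12 ≤ ℓ (p+3) := (IH (p+3) (by omega)).2.1 (by omega)
      have hcsq : (ℓ (p+3))^2 ≤ 3 * ℓ (p+4) := (IH (p+3) (by omega)).2.2.1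
      have hl48 : 48 ≤ ℓ (p+4) := by nlinarith
      have hKs : ∀ m, m + 1 ≤ p + 4 → ∀ k, 2 ≤ k →
          (ℓ m).toNat.choose (k+1) ≤ (ℓ (m+1)).toNat.choose k := by
        intro m hm k hk
        exact (IH m (by omega)).2.2.2 k hk
      have mkhK : ∀ N, N ≤ p + 4 → 2 ≤ N → (∀ j, j < N →
          (((ℓ (N - (j+1))).toNat.choose (j + 3) : ℤ)) ≤ ((ℓ (N - j)).toNat.choose (j + 2) : ℤ)) := by
        intro N hN h2N j hj
        have e : N - j = (N - (j+1)) + 1 := by omega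
        rw [e]
        exact_mod_cast Nat.cast_le.mpr (hKs (N - (j+1)) (by omega) (j+2) (by omega))
      have sb1 := sum_bound ℓ h0 hrec (p+3) (by omega) (mkhK (p+3) (by omega) (by omega))
      have sb2 := sum_bound ℓ h0 hrec (p+4) (by omega) (mkhK (p+4) (by omega) (by omega))
      -- notation
      set c : ℤ := ℓ (p+3) with hc
      set L : ℤ := ℓ (p+4) with hL
      set y : ℤ := ℓ (p+5) with hy
      have hcnn' : ((c.toNat : ℕ) : ℤ) = c := Int.toNat_of_nonneg (by omega)
      have hLnn' : ((L.toNat : ℕ) : ℤ) = L := Int.toNat_of_nonneg (by omega)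
      -- cast choose identities
      have cc2 : 2 * ((c.toNat.choose 2 : ℕ) : ℤ) = c * (c - 1) := by
        have h := two_mul_choose_two c.toNat
        zify [show 1 ≤ c.toNat by omega] at h
        rw [hcnn'] at h
        linarith
      have cL2 : 2 * ((L.toNat.choose 2 : ℕ) : ℤ) = L * (L - 1) := by
        have h := two_mul_choose_two L.toNat
        zify [show 1 ≤ L.toNat by omega] at h
        rw [hLnn'] at h
        linarith
      have cc3 : 6 * ((c.toNat.choose 3 : ℕ) : ℤ) ≤ c ^ 3 := by
        have h := six_choose_three_le c.toNat
        zify at h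
        rw [hcnn'] at h
        linarith
      have e43 : p + 4 - 1 = p + 3 := rfl
      rw [e43] at sb2
      -- upper bound at level p+3 : 2L ≤ c^2 - c + 2
      have hub : 2 * L ≤ c * (c - 1) + 2 := by linarith [sb1.2]
      -- lower bound at level p+4 : 6y ≥ 6 + 3 L (L-1) - c^3
      have hlb : 6 + 3 * (L * (L-1)) - c^3 ≤ 6 * y := by
        have h := sb2.1
        linarith
      -- conclude component 3 : L^2 ≤ 3 y
      have comp3 : L^2 ≤ 3 * y := by nlinarith [hcsq, hub, hlb, hc12, hl48]
      refine ⟨by omega, by omega, comp3, ?_⟩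
      intro k hk
      apply choose_step _ _ hk
      · omega
      · have hynn' : ((y.toNat : ℕ) : ℤ) = y := Int.toNat_of_nonneg (by nlinarith [comp3, sq_nonneg L, hl48])
        have hfin : (((ℓ (p+4)).toNat ^ 2 : ℕ) : ℤ) ≤ ((3 * (ℓ (p+5)).toNat : ℕ) : ℤ) := by
          push_cast
          rw [show ((ℓ (p+4)).toNat : ℤ) = L from hLnn', show ((ℓ (p+5)).toNat : ℤ) = y from hynn']
          nlinarith
        exact_mod_cast hfin


end

lemma cast2 (m : ℤ) (hm : 1 ≤ m) : 2 * ((m.toNat.choose 2 : ℕ) : ℤ) = m * (m - 1) := by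
  have h := two_mul_choose_two m.toNat
  zify [show 1 ≤ m.toNat by omega] at h
  rw [Int.toNat_of_nonneg (by omega)] at h
  linarith

lemma cast3 (m : ℤ) (hm : 0 ≤ m) : 6 * ((m.toNat.choose 3 : ℕ) : ℤ) ≤ m ^ 3 := by
  have h := six_choose_three_le m.toNat
  zify at h
  rw [Int.toNat_of_nonneg hm] at h
  linarith

section
variable (ℓ : ℕ → ℤ) (h0 : ℓ 0 = 3)
  (hrec : ∀ n : ℕ, ℓ (n + 1) =
      1 + ∑ j ∈ Finset.range (n + 1), (-1) ^ j * ((ℓ (n - j)).toNat.choose (j + 2) : ℤ))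

include h0 hrec

lemma lmono : Monotone ℓ := by
  apply monotone_nat_of_le_succ
  intro n
  have h1 := (inv ℓ h0 hrec n).1
  have h2 := (inv ℓ h0 hrec n).2.2.1
  nlinarith

lemma lge4 : ∀ n, 4 ≤ ℓ (n+1) := by
  intro n
  have := lmono ℓ h0 hrec (show 1 ≤ n+1 by omega)
  rw [lval1 ℓ h0 hrec] at this
  exact this

lemma lge924 : ∀ n, 5 ≤ n → 924 ≤ ℓ n := by
  intro n hn
  have := lmono ℓ h0 hrec hn
  rw [lval5 ℓ h0 hrec] at this
  exact this

lemma hKall : ∀ N, 2 ≤ N → ∀ j, j < N →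
    (((ℓ (N - (j+1))).toNat.choose (j + 3) : ℤ)) ≤ ((ℓ (N - j)).toNat.choose (j + 2) : ℤ) := by
  intro N _ j hj
  have e : N - j = (N - (j+1)) + 1 := by omega
  rw [e]
  exact_mod_cast Nat.cast_le.mpr ((inv ℓ h0 hrec (N - (j+1))).2.2.2 (j+2) (by omega))

lemma lub : ∀ n, 1 ≤ n → 2 * ℓ (n+1) ≤ (ℓ n)^2 - ℓ n + 2 := by
  intro n hn
  rcases eq_or_lt_of_le hn with h | h
  · rw [← h, lval1 ℓ h0 hrec, lval2 ℓ h0 hrec]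
    norm_num
  · have hn2 : 2 ≤ n := h
    have sb := (sum_bound ℓ h0 hrec n hn2 (hKall ℓ h0 hrec n hn2)).2
    have hc2 := cast2 (ℓ n) (by linarith [(inv ℓ h0 hrec n).1])
    nlinarith

lemma llb : ∀ n, 2 ≤ n → 6 + 3*((ℓ n)^2 - ℓ n) - (ℓ (n-1))^3 ≤ 6 * ℓ (n+1) := by
  intro n hn
  have sb := (sum_bound ℓ h0 hrec n hn (hKall ℓ h0 hrec n hn)).1
  have hc2 := cast2 (ℓ n) (by linarith [(inv ℓ h0 hrec n).1])
  have hc3 := cast3 (ℓ (n-1)) (by linarith [(inv ℓ h0 hrec (n-1)).1])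
  nlinarith

end

section
variable (ℓ : ℕ → ℤ) (h0 : ℓ 0 = 3)
  (hrec : ∀ n : ℕ, ℓ (n + 1) =
      1 + ∑ j ∈ Finset.range (n + 1), (-1) ^ j * ((ℓ (n - j)).toNat.choose (j + 2) : ℤ))

include h0 hrec in
lemma keyineq : ∀ k, 4 ≤ k →
    (((ℓ (k+1)):ℝ)^2 - 2*((ℓ (k+2)):ℝ)) * Real.sqrt ((ℓ (k+1)):ℝ) ≤ 16 * ((ℓ (k+2)):ℝ) := by
  intro k hk
  set xk : ℝ := ((ℓ (k+1)):ℝ) with hxk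
  set y : ℝ := ((ℓ (k+2)):ℝ) with hy
  set cR : ℝ := ((ℓ k):ℝ) with hcR
  have hx924 : (924:ℝ) ≤ xk := by rw [hxk]; exact_mod_cast lge924 ℓ h0 hrec (k+1) (by omega)
  have hcsq : cR^2 ≤ 3*xk := by rw [hxk, hcR]; exact_mod_cast (inv ℓ h0 hrec k).2.2.1
  have hcnn : (0:ℝ) ≤ cR := by
    rw [hcR]; exact_mod_cast le_trans (by norm_num : (0:ℤ) ≤ 3) (inv ℓ h0 hrec k).1
  have hlbZ := llb ℓ h0 hrec (k+1) (by omega)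
  have ekk : k + 1 - 1 = k := rfl
  rw [ekk] at hlbZ
  have hlbR : 6 + 3*(xk^2 - xk) - cR^3 ≤ 6*y := by rw [hxk, hcR, hy]; exact_mod_cast hlbZ
  set s : ℝ := Real.sqrt xk with hs
  have hsnn : 0 ≤ s := Real.sqrt_nonneg _
  have hs2 : s^2 = xk := Real.sq_sqrt (by linarith)
  have hs13 : (13:ℝ) ≤ s := by
    have h169 : Real.sqrt 169 ≤ s := Real.sqrt_le_sqrt (by linarith)
    rwa [show (169:ℝ) = 13^2 by norm_num, Real.sqrt_sq (by norm_num)] at h169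
  have hc2s : cR ≤ 2*s := by nlinarith [hcsq, hs2, hsnn, hcnn, hs13]
  have hcube : cR^3 ≤ 8*s^3 := by
    nlinarith [hc2s, hcnn, hsnn, sq_nonneg (cR + 2*s), sq_nonneg (cR - 2*s)]
  have h6y : 6 + 3*s^4 - 3*s^2 - 8*s^3 ≤ 6*y := by nlinarith [hlbR, hs2, hcube]
  have hfin : 6*s^5 ≤ (16 + 2*s)*(6 + 3*s^4 - 3*s^2 - 8*s^3) := by
    nlinarith [mul_nonneg (sub_nonneg.mpr hs13) (pow_nonneg hsnn 3),
      mul_nonneg (sub_nonneg.mpr hs13) (pow_nonneg hsnn 2),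
      mul_nonneg (sub_nonneg.mpr hs13) hsnn, hs13]
  have hmul : (16 + 2*s)*(6 + 3*s^4 - 3*s^2 - 8*s^3) ≤ (16 + 2*s)*(6*y) :=
    mul_le_mul_of_nonneg_left h6y (by linarith)
  have : (xk^2 - 2*y) * s = s^5 - 2*y*s := by rw [← hs2]; ring
  nlinarith [hfin, hmul]

end
open Filter

set_option maxHeartbeats 1000000 in
theorem rho_decreasing_and_converges (ℓ : ℕ → ℤ) (h0 : ℓ 0 = 3)
    (hrec : ∀ n : ℕ, ℓ (n + 1) =
      1 + ∑ j ∈ Finset.range (n + 1), (-1) ^ j * ((ℓ (n - j)).toNat.choose (j + 2) : ℤ))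
    (ρseq : ℕ → ℝ)
    (hρ : ∀ n : ℕ, ρseq n = (Real.logb 2 (ℓ (n + 1) : ℝ) - 1) / 2 ^ n) :
    StrictAnti ρseq ∧
      ∃ ρ : ℝ, 0 ≤ ρ ∧ Tendsto ρseq atTop (nhds ρ) ∧
        ∀ n : ℕ, 4 ≤ n →
          ρ ≤ ρseq n ∧
            ρseq n - 1 / (2 ^ (n - 3) * Real.log 2 * Real.sqrt (ℓ (n + 1) : ℝ)) ≤ ρ := by
  have hge4 : ∀ n, (4:ℝ) ≤ ((ℓ (n+1)):ℝ) := fun n => by exact_mod_cast lge4 ℓ h0 hrec n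
  have hxpos : ∀ n, (0:ℝ) < ((ℓ (n+1)):ℝ) := fun n => lt_of_lt_of_le (by norm_num) (hge4 n)
  set l2 : ℝ := Real.log 2 with hl2def
  have hl2 : 0 < l2 := Real.log_pos (by norm_num)
  set G : ℕ → ℝ := fun n => Real.log ((ℓ (n+1)):ℝ) with hG
  have hρ' : ∀ n, ρseq n = (G n / l2 - 1) / 2 ^ n := by
    intro n
    rw [hρ n, hG, hl2def, ← Real.log_div_log]
  -- strict upper bound : 2 x(n+1) < x n ^ 2
  have hubR : ∀ n, 2 * ((ℓ (n+2)):ℝ) < ((ℓ (n+1)):ℝ)^2 := by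
    intro n
    have h := lub ℓ h0 hrec (n+1) (by omega)
    have h4 : 4 ≤ ℓ (n+1) := lge4 ℓ h0 hrec n
    have : 2 * ℓ (n+2) < (ℓ (n+1))^2 := by nlinarith
    exact_mod_cast this
  -- step in logs
  have hstep : ∀ n, G (n+1) < 2 * G n - l2 := by
    intro n
    have h1 : G (n+1) < Real.log (((ℓ (n+1)):ℝ)^2 / 2) := by
      apply Real.log_lt_log (hxpos (n+1))
      rw [lt_div_iff₀ (by norm_num)]
      linarith [hubR n]
    have h2 : Real.log (((ℓ (n+1)):ℝ)^2 / 2) = 2 * G n - l2 := by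
      rw [Real.log_div (pow_ne_zero 2 (ne_of_gt (hxpos n))) (by norm_num), Real.log_pow]
      push_cast
      ring
    linarith [h1, h2]
  have hGl2 : ∀ n, l2 ≤ G n := by
    intro n
    rw [hl2def, hG]
    exact (Real.log_le_log_iff (by norm_num) (hxpos n)).2 (by linarith [hge4 n])
  -- strict antitone
  have hanti : StrictAnti ρseq := by
    apply strictAnti_nat_of_succ_lt
    intro n
    rw [hρ' n, hρ' (n+1)]
    have hpn : (0:ℝ) < 2^n := by positivity
    have hq : G (n+1)/l2 < 2*(G n / l2) - 1 := by
      rw [div_lt_iff₀ hl2]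
      have e : (2*(G n/l2) - 1)*l2 = 2*G n - l2 := by field_simp
      rw [e]
      exact hstep n
    rw [pow_succ, div_lt_div_iff₀ (by positivity) hpn]
    nlinarith [mul_lt_mul_of_pos_right (show G (n+1)/l2 - 1 < 2*((G n)/l2 - 1) by linarith) hpn]
  have hρpos : ∀ n, 0 ≤ ρseq n := by
    intro n
    rw [hρ' n]
    apply div_nonneg _ (by positivity)
    have : 1 ≤ G n / l2 := (one_le_div hl2).2 (hGl2 n)
    linarith
  have hBdd : BddBelow (Set.range ρseq) := by
    refine ⟨0, ?_⟩
    rintro y ⟨n, rfl⟩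
    exact hρpos n
  refine ⟨hanti, ⨅ n, ρseq n, le_ciInf hρpos, tendsto_atTop_ciInf hanti.antitone hBdd, ?_⟩
  intro n hn
  refine ⟨ciInf_le hBdd n, ?_⟩
  -- tail estimate
  set sn : ℝ := Real.sqrt ((ℓ (n+1)):ℝ) with hsn
  have hsnpos : 0 < sn := Real.sqrt_pos.2 (hxpos n)
  set D : ℝ := 8 / (sn * l2) with hD
  have hD0 : 0 ≤ D := by positivity
  -- one-step bound
  have hstepB : ∀ k, n ≤ k → ρseq k - ρseq (k+1) ≤ D * (1/2^k - 1/2^(k+1)) := by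
    intro k hkn
    have hk4 : 4 ≤ k := le_trans hn hkn
    have hkey := keyineq ℓ h0 hrec k hk4
    have hsk : sn ≤ Real.sqrt ((ℓ (k+1)):ℝ) := by
      rw [hsn]
      apply Real.sqrt_le_sqrt
      exact_mod_cast lmono ℓ h0 hrec (by omega : n+1 ≤ k+1)
    set sk : ℝ := Real.sqrt ((ℓ (k+1)):ℝ) with hskdef
    have hskpos : 0 < sk := lt_of_lt_of_le hsnpos hsk
    set xk : ℝ := ((ℓ (k+1)):ℝ) with hxkdef
    set xk1 : ℝ := ((ℓ (k+2)):ℝ) with hxk1def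
    have hx1pos : 0 < xk1 := hxpos (k+1)
    have hub2 : 2 * xk1 < xk^2 := hubR k
    set t : ℝ := xk^2 / (2*xk1) with ht
    have ht1 : 1 ≤ t := by
      rw [ht, le_div_iff₀ (by positivity)]
      linarith
    have hlog : Real.log t ≤ t - 1 := Real.log_le_sub_one_of_pos (by linarith)
    have ht8 : t - 1 ≤ 8 / sk := by
      have e : t - 1 = (xk^2 - 2*xk1) / (2*xk1) := by
        rw [ht]; field_simp
      rw [e, div_le_div_iff₀ (by positivity) hskpos]
      linarith [hkey]
    have ht8' : (8:ℝ) / sk ≤ 8 / sn := div_le_div_of_nonneg_left (by norm_num) hsnpos hsk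
    have hlogt : Real.log t = 2 * G k - l2 - G (k+1) := by
      have hx2pos : (0:ℝ) < 2*xk1 := by linarith
      rw [ht, Real.log_div (pow_ne_zero 2 (ne_of_gt (hxpos k))) hx2pos.ne', Real.log_mul (by norm_num) (ne_of_gt hx1pos),
        Real.log_pow]
      push_cast
      rw [hG]
      ring
    have hkeylog : 2 * G k - l2 - G (k+1) ≤ 8 / sn := by
      rw [← hlogt]
      linarith
    -- now the algebra
    rw [hρ' k, hρ' (k+1)]
    have hpk : (0:ℝ) < 2^k := by positivity
    have e1 : (G k / l2 - 1)/2^k - (G (k+1)/l2 - 1)/2^(k+1)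
        = (2*(G k/l2) - 1 - G (k+1)/l2) / 2^(k+1) := by
      rw [pow_succ]
      field_simp
      ring
    have e2 : D * (1/2^k - 1/2^(k+1)) = D / 2^(k+1) := by
      rw [pow_succ]
      field_simp
      ring
    rw [e1, e2]
    apply (div_le_div_iff_of_pos_right (by positivity)).2
    have heq2 : 2*(G k/l2) - 1 - G (k+1)/l2 = (2*G k - l2 - G (k+1))/l2 := by
      field_simp
    rw [heq2, hD]
    rw [div_le_div_iff₀ hl2 (mul_pos hsnpos hl2)]
    have hkey8 : (2*G k - l2 - G (k+1)) * sn ≤ 8 := (le_div_iff₀ hsnpos).1 hkeylog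
    nlinarith [mul_le_mul_of_nonneg_right hkey8 (le_of_lt hl2)]
  -- accumulate
  have hacc : ∀ m, n ≤ m → ρseq n - ρseq m ≤ D * (1/2^n - 1/2^m) := by
    intro m hm
    induction m, hm using Nat.le_induction with
    | base => simp
    | succ m hm IH =>
      calc ρseq n - ρseq (m+1) = (ρseq n - ρseq m) + (ρseq m - ρseq (m+1)) := by ring
        _ ≤ D * (1/2^n - 1/2^m) + D * (1/2^m - 1/2^(m+1)) := add_le_add IH (hstepB m hm)
        _ = D * (1/2^n - 1/2^(m+1)) := by ring
  have hlow : ∀ m, n ≤ m → ρseq n - D/2^n ≤ ρseq m := by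
    intro m hm
    have h1 := hacc m hm
    have h2 : (0:ℝ) ≤ D * (1/2^m) := by positivity
    have h3 : D * (1/2^n - 1/2^m) ≤ D/2^n := by
      have : D * (1/2^n - 1/2^m) = D/2^n - D*(1/2^m) := by ring
      linarith
    linarith
  have hge : ρseq n - D/2^n ≤ ⨅ k, ρseq k := by
    apply le_ciInf
    intro m
    rcases le_or_gt n m with h | h
    · exact hlow m h
    · have h1 : ρseq m ≥ ρseq n := hanti.antitone (le_of_lt h)
      have h2 : (0:ℝ) ≤ D/2^n := by positivity
      linarith
  -- identify constants
  have hpow : (2:ℝ)^(n-3) * 8 = 2^n := by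
    rw [show (8:ℝ) = 2^3 by norm_num, ← pow_add]
    congr 1
    omega
  have heq : 1 / (2^(n-3) * l2 * sn) = D/2^n := by
    have h8 : (2:ℝ)^n = 2^(n-3)*8 := hpow.symm
    rw [hD, h8, div_div]
    have hden1 : (0:ℝ) < 2^(n-3)*l2*sn := mul_pos (mul_pos (pow_pos two_pos _) hl2) hsnpos
    have hden2 : (0:ℝ) < sn*l2*(2^(n-3)*8) := by
      apply mul_pos (mul_pos hsnpos hl2)
      positivity
    rw [div_eq_div_iff hden1.ne' hden2.ne']
    ring
  rw [heq]
  exact hge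
end

section
/- Define ℓ_n by ℓ_0 = 3 and ℓ_{n+1} = 1 + Σ_{j=0}^{n} (-1)^j * binom(ℓ_{n-j}, j+2). Then ℓ_n is asymptotic to 2 · 2^(ρ·2^n) as n → ∞, for some real constant ρ > 0; that is, ℓ_n / (2 · 2^(ρ·2^n)) → 1. -/
lemma desc_cross (a b : ℕ) (h : b ≤ a) :
    ∀ k, b.descFactorial k * a ^ k ≤ a.descFactorial k * b ^ k := by
  intro k
  induction k with
  | zero => simp
  | succ k ih =>
    rw [Nat.descFactorial_succ, Nat.descFactorial_succ, pow_succ, pow_succ]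
    have h1 : (b - k) * a ≤ (a - k) * b := by
      rw [Nat.sub_mul, Nat.sub_mul, Nat.mul_comm b a]
      exact Nat.sub_le_sub_left (Nat.mul_le_mul_left k h) _
    calc (b - k) * b.descFactorial k * (a ^ k * a)
        = ((b - k) * a) * (b.descFactorial k * a ^ k) := by ring
      _ ≤ ((a - k) * b) * (a.descFactorial k * b ^ k) := Nat.mul_le_mul h1 ih
      _ = (a - k) * a.descFactorial k * (b ^ k * b) := by ring

lemma choose_cross (a b k : ℕ) (hb : b ≤ a) :
    b.choose k * a ^ k ≤ a.choose k * b ^ k := by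
  have := desc_cross a b hb k
  rw [Nat.descFactorial_eq_factorial_mul_choose, Nat.descFactorial_eq_factorial_mul_choose] at this
  have hf : 0 < k.factorial := Nat.factorial_pos k
  refine Nat.le_of_mul_le_mul_left ?_ hf
  calc k.factorial * (b.choose k * a ^ k) = k.factorial * b.choose k * a ^ k := by ring
    _ ≤ k.factorial * a.choose k * b ^ k := this
    _ = k.factorial * (a.choose k * b ^ k) := by ring

/-- Key analytic lemma: if `b ≤ a`, `b^3 ≤ a^2`, `k ≥ 2` then `C(b,k+1) ≤ C(a,k)`. -/
lemma choose_key (a b k : ℕ) (h3 : 3 ≤ b) (hb : b ≤ a) (h : b ^ 3 ≤ a ^ 2) (hk : 2 ≤ k) :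
    b.choose (k + 1) ≤ a.choose k := by
  obtain ⟨j, rfl⟩ : ∃ j, k = j + 2 := ⟨k - 2, by omega⟩
  have h2 : b ^ (j + 3) ≤ a ^ (j + 2) := by
    calc b ^ (j + 3) = b ^ j * b ^ 3 := by ring
      _ ≤ a ^ j * a ^ 2 := Nat.mul_le_mul (Nat.pow_le_pow_left hb j) h
      _ = a ^ (j + 2) := by ring
  have hmain : b.choose (j + 2) * b ≤ a.choose (j + 2) := by
    have hbpos : 0 < b ^ (j + 2) := Nat.pow_pos (by omega)
    refine Nat.le_of_mul_le_mul_right ?_ hbpos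
    calc b.choose (j + 2) * b * b ^ (j + 2) = b.choose (j + 2) * b ^ (j + 3) := by ring
      _ ≤ b.choose (j + 2) * a ^ (j + 2) := Nat.mul_le_mul_left _ h2
      _ ≤ a.choose (j + 2) * b ^ (j + 2) := choose_cross a b (j + 2) hb
  calc b.choose (j + 3) ≤ b.choose (j + 3) * (j + 3) := Nat.le_mul_of_pos_right _ (by omega)
    _ = b.choose (j + 2) * (b - (j + 2)) := Nat.choose_succ_right_eq b (j + 2)
    _ ≤ b.choose (j + 2) * b := Nat.mul_le_mul_left _ (Nat.sub_le _ _)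
    _ ≤ a.choose (j + 2) := hmain

lemma two_mul_choose_two_s13 (n : ℕ) : 2 * n.choose 2 = n * (n - 1) := by
  calc 2 * n.choose 2 = (2).factorial * n.choose 2 := by norm_num [Nat.factorial]
    _ = n.descFactorial 2 := (Nat.descFactorial_eq_factorial_mul_choose n 2).symm
    _ = (n - 1) * n := by rw [Nat.descFactorial_succ, Nat.descFactorial_one]
    _ = n * (n - 1) := Nat.mul_comm _ _

lemma six_choose_three_le_s13 (n : ℕ) : 6 * n.choose 3 ≤ n ^ 3 := by
  calc 6 * n.choose 3 = (3).factorial * n.choose 3 := by norm_num [Nat.factorial]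
    _ = n.descFactorial 3 := (Nat.descFactorial_eq_factorial_mul_choose n 3).symm
    _ ≤ n ^ 3 := Nat.descFactorial_le_pow n 3

lemma choose3_anti (k : ℕ) (hk : 2 ≤ k) : Nat.choose 3 (k + 1) ≤ Nat.choose 3 k := by
  rcases Nat.lt_or_ge k 4 with h | h
  · interval_cases k <;> decide
  · rw [Nat.choose_eq_zero_of_lt (by omega)]; exact Nat.zero_le _

lemma choose_small (a b : ℕ) (hb : b ≤ 6)
    (hsmall : ∀ k, 2 ≤ k → k < b → b.choose (k + 1) ≤ a.choose k) :
    ∀ k, 2 ≤ k → b.choose (k + 1) ≤ a.choose k := by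
  intro k hk
  rcases Nat.lt_or_ge k b with h | h
  · exact hsmall k hk h
  · rw [Nat.choose_eq_zero_of_lt (by omega)]; exact Nat.zero_le _

lemma alt_peel (f : ℕ → ℤ) (m : ℕ) :
    ∑ j ∈ Finset.range (m + 1), (-1) ^ j * f j
      = f 0 - ∑ j ∈ Finset.range m, (-1) ^ j * f (j + 1) := by
  rw [Finset.sum_range_succ' (fun j => (-1 : ℤ) ^ j * f j) m]
  have : ∀ j, (-1 : ℤ) ^ (j + 1) * f (j + 1) = -((-1) ^ j * f (j + 1)) := by
    intro j; rw [pow_succ]; ring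
  rw [Finset.sum_congr rfl (fun j _ => this j), Finset.sum_neg_distrib]
  ring

lemma alt_nonneg : ∀ (k : ℕ) (f : ℕ → ℤ), (∀ j, 0 ≤ f j) → (∀ j, f (j + 1) ≤ f j) →
    0 ≤ ∑ j ∈ Finset.range k, (-1) ^ j * f j := by
  intro k
  induction k using Nat.strong_induction_on with
  | _ k ih =>
    match k with
    | 0 => intro f h1 h2; simp
    | 1 => intro f h1 h2; simpa using h1 0
    | (m + 2) =>
      intro f h1 h2
      rw [alt_peel f (m + 1), alt_peel (fun j => f (j + 1)) m]
      have := ih m (by omega) (fun j => f (j + 2)) (fun j => h1 _) (fun j => h2 _)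
      have h01 := h2 0
      linarith

lemma alt_le_first (k : ℕ) (f : ℕ → ℤ) (h1 : ∀ j, 0 ≤ f j) (h2 : ∀ j, f (j + 1) ≤ f j) :
    ∑ j ∈ Finset.range k, (-1) ^ j * f j ≤ f 0 := by
  match k with
  | 0 => simpa using h1 0
  | (m + 1) =>
    rw [alt_peel f m]
    have := alt_nonneg m (fun j => f (j + 1)) (fun j => h1 _) (fun j => h2 _)
    linarith

lemma alt_ge_sub (m : ℕ) (f : ℕ → ℤ) (h1 : ∀ j, 0 ≤ f j) (h2 : ∀ j, f (j + 1) ≤ f j) :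
    f 0 - f 1 ≤ ∑ j ∈ Finset.range (m + 1), (-1) ^ j * f j := by
  rw [alt_peel f m]
  have := alt_le_first m (fun j => f (j + 1)) (fun j => h1 _) (fun j => h2 _)
  linarith


section Master
variable (ℓ : ℕ → ℤ) (h0 : ℓ 0 = 3)
  (hrec : ∀ n : ℕ, ℓ (n + 1) =
      1 + ∑ j ∈ Finset.range (n + 1), (-1) ^ j * ((ℓ (n - j)).toNat.choose (j + 2) : ℤ))

include h0 hrec

lemma vals : ℓ 1 = 4 ∧ ℓ 2 = 6 ∧ ℓ 3 = 12 ∧ ℓ 4 = 48 := by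
  have h1 : ℓ 1 = 4 := by
    rw [hrec 0]; norm_num [h0]; decide
  have h2 : ℓ 2 = 6 := by
    rw [hrec 1]; norm_num [Finset.sum_range_succ, h0, h1]; decide
  have h3 : ℓ 3 = 12 := by
    rw [hrec 2]; norm_num [Finset.sum_range_succ, h0, h1, h2]; decide
  have h4 : ℓ 4 = 48 := by
    rw [hrec 3]; norm_num [Finset.sum_range_succ, h0, h1, h2, h3]; decide
  exact ⟨h1, h2, h3, h4⟩

lemma rec_bounds (n : ℕ)
    (hKey : ∀ m, m + 1 ≤ n → ∀ k, 2 ≤ k →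
      (ℓ m).toNat.choose (k + 1) ≤ (ℓ (m + 1)).toNat.choose k) :
    1 ≤ ℓ (n + 1) ∧ ℓ (n + 1) ≤ 1 + ((ℓ n).toNat.choose 2 : ℤ) ∧
      ∀ p, n = p + 1 →
        1 + ((ℓ n).toNat.choose 2 : ℤ) - ((ℓ p).toNat.choose 3 : ℤ) ≤ ℓ (n + 1) := by
  set f : ℕ → ℤ := fun j => ((ℓ (n - j)).toNat.choose (j + 2) : ℤ) with hf
  have hnn : ∀ j, 0 ≤ f j := fun j => Int.natCast_nonneg _
  have hant : ∀ j, f (j + 1) ≤ f j := by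
    intro j
    rcases Nat.lt_or_ge j n with h | h
    · have h1 : n - j = (n - (j + 1)) + 1 := by omega
      have h2 := hKey (n - (j + 1)) (by omega) (j + 2) (by omega)
      simp only [hf, h1]
      exact_mod_cast h2
    · have e1 : n - j = 0 := by omega
      have e2 : n - (j + 1) = 0 := by omega
      simp only [hf, e1, e2, h0]
      norm_num
      exact_mod_cast choose3_anti (j + 2) (by omega)
  have hS := hrec n
  have h0' : f 0 = ((ℓ n).toNat.choose 2 : ℤ) := by simp [hf]
  have hupper : ℓ (n + 1) ≤ 1 + ((ℓ n).toNat.choose 2 : ℤ) := by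
    rw [hS, ← h0']
    have := alt_le_first (n + 1) f hnn hant
    linarith
  have hlow : 1 ≤ ℓ (n + 1) := by
    rw [hS]
    have := alt_nonneg (n + 1) f hnn hant
    linarith
  refine ⟨hlow, hupper, ?_⟩
  intro p hp
  subst hp
  have h1' : f 1 = ((ℓ p).toNat.choose 3 : ℤ) := by simp [hf]
  rw [hS, ← h0', ← h1']
  have := alt_ge_sub (p + 1) f hnn hant
  linarith

set_option maxHeartbeats 1000000 in
lemma master : ∀ n : ℕ, 3 ≤ ℓ n ∧ ℓ n ≤ ℓ (n + 1) ∧ 2 * ℓ (n + 1) ≤ (ℓ n) ^ 2 ∧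
    (ℓ n) ^ 2 ≤ 4 * ℓ (n + 1) ∧ (4 ≤ n → (n : ℤ) + 44 ≤ ℓ n) ∧
    ∀ k, 2 ≤ k → (ℓ n).toNat.choose (k + 1) ≤ (ℓ (n + 1)).toNat.choose k := by
  obtain ⟨hl1, hl2, hl3, hl4⟩ := vals ℓ h0 hrec
  have t0 : (ℓ 0).toNat = 3 := by rw [h0]; rfl
  have t1 : (ℓ 1).toNat = 4 := by rw [hl1]; rfl
  have t2 : (ℓ 2).toNat = 6 := by rw [hl2]; rfl
  have t3 : (ℓ 3).toNat = 12 := by rw [hl3]; rfl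
  have t4 : (ℓ 4).toNat = 48 := by rw [hl4]; rfl
  intro n
  induction n using Nat.strong_induction_on with
  | _ n ih =>
    by_cases hn : n ≤ 3
    · interval_cases n
      · refine ⟨by omega, by norm_num [h0, hl1], by norm_num [h0, hl1], by norm_num [h0, hl1], by omega, ?_⟩
        simp only [t0, t1]
        exact choose_small 4 3 (by norm_num) (by intro k hk hk'; interval_cases k <;> decide)
      · refine ⟨by omega, by norm_num [hl1, hl2], by norm_num [hl1, hl2], by norm_num [hl1, hl2], by omega, ?_⟩
        simp only [t1, t2]
        exact choose_small 6 4 (by norm_num) (by intro k hk hk'; interval_cases k <;> decide)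
      · refine ⟨by omega, by norm_num [hl2, hl3], by norm_num [hl2, hl3], by norm_num [hl2, hl3], by omega, ?_⟩
        simp only [t2, t3]
        exact choose_small 12 6 (by norm_num) (by intro k hk hk'; interval_cases k <;> decide)
      · refine ⟨by omega, by norm_num [hl3, hl4], by norm_num [hl3, hl4], by norm_num [hl3, hl4], by omega, ?_⟩
        simp only [t3, t4]
        intro k hk
        exact choose_key 48 12 k (by norm_num) (by norm_num) (by norm_num) hk
    · obtain ⟨m, rfl⟩ : ∃ m, n = m + 4 := ⟨n - 4, by omega⟩
      obtain ⟨hc3, hcb0, hub_c0, hc2_4b0, hc44, hKeyc0⟩ := ih (m + 3) (by omega)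
      have hcb : ℓ (m + 3) ≤ ℓ (m + 4) := hcb0
      have hub_c : 2 * ℓ (m + 4) ≤ ℓ (m + 3) ^ 2 := hub_c0
      have hc2_4b : ℓ (m + 3) ^ 2 ≤ 4 * ℓ (m + 4) := hc2_4b0
      have hb3 : 3 ≤ ℓ (m + 4) := le_trans hc3 hcb
      have hc12 : 12 ≤ ℓ (m + 3) := by
        rcases Nat.eq_zero_or_pos m with rfl | hm
        · norm_num [hl3]
        · have := hc44 (by omega); push_cast at this; omega
      have hb16 : 16 ≤ ℓ (m + 4) := by
        rcases Nat.eq_zero_or_pos m with rfl | hm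
        · norm_num [hl4]
        · have := hc44 (by omega); push_cast at this
          linarith
      have hrb := rec_bounds ℓ h0 hrec (m + 4)
        (fun m' hm' => (ih m' (by omega)).2.2.2.2.2)
      obtain ⟨hpos50, hup50, hlow5⟩ := hrb
      have hpos5 : (1:ℤ) ≤ ℓ (m + 5) := hpos50
      have hup5 : ℓ (m + 5) ≤ 1 + ((ℓ (m + 4)).toNat.choose 2 : ℤ) := hup50
      have hlow5' : 1 + ((ℓ (m + 4)).toNat.choose 2 : ℤ) - ((ℓ (m + 3)).toNat.choose 3 : ℤ)
          ≤ ℓ (m + 5) := hlow5 (m + 3) rfl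
      have e_b : ((ℓ (m + 4)).toNat : ℤ) = ℓ (m + 4) := Int.toNat_of_nonneg (by linarith)
      have e_c : ((ℓ (m + 3)).toNat : ℤ) = ℓ (m + 3) := Int.toNat_of_nonneg (by linarith)
      have e_a : ((ℓ (m + 5)).toNat : ℤ) = ℓ (m + 5) := Int.toNat_of_nonneg (by omega)
      have h2b : 2 * (((ℓ (m + 4)).toNat.choose 2 : ℕ) : ℤ) = ℓ (m + 4) * (ℓ (m + 4) - 1) := by
        have hnat := two_mul_choose_two_s13 (ℓ (m + 4)).toNat
        have h1n : 1 ≤ (ℓ (m + 4)).toNat := by omega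
        calc 2 * (((ℓ (m + 4)).toNat.choose 2 : ℕ) : ℤ)
            = ((2 * (ℓ (m + 4)).toNat.choose 2 : ℕ) : ℤ) := by push_cast; ring
          _ = (((ℓ (m + 4)).toNat * ((ℓ (m + 4)).toNat - 1) : ℕ) : ℤ) := by rw [hnat]
          _ = ℓ (m + 4) * (ℓ (m + 4) - 1) := by
              rw [Nat.cast_mul, Nat.cast_sub h1n, e_b, Nat.cast_one]
      have h6c : 6 * (((ℓ (m + 3)).toNat.choose 3 : ℕ) : ℤ) ≤ ℓ (m + 3) ^ 3 := by
        have hnat := six_choose_three_le_s13 (ℓ (m + 3)).toNat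
        calc 6 * (((ℓ (m + 3)).toNat.choose 3 : ℕ) : ℤ)
            = ((6 * (ℓ (m + 3)).toNat.choose 3 : ℕ) : ℤ) := by push_cast; ring
          _ ≤ (((ℓ (m + 3)).toNat ^ 3 : ℕ) : ℤ) := by exact_mod_cast hnat
          _ = ℓ (m + 3) ^ 3 := by rw [Nat.cast_pow, e_c]
      have hc0 : (0:ℤ) ≤ ℓ (m + 3) := by linarith
      have hb0 : (0:ℤ) ≤ ℓ (m + 4) := by linarith
      have hupper : 2 * ℓ (m + 5) ≤ ℓ (m + 4) ^ 2 := by linarith [hup5, h2b, hb3]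
      have hlower6 : 3 * ℓ (m + 4) ^ 2 - 3 * ℓ (m + 4) - ℓ (m + 3) ^ 3 + 6 ≤ 6 * ℓ (m + 5) := by
        linarith [hlow5', h2b, h6c]
      have hc3b : ℓ (m + 3) ^ 3 ≤ 4 * ℓ (m + 4) * ℓ (m + 3) := by
        have := mul_le_mul_of_nonneg_right hc2_4b hc0
        linarith
      have h8c : 8 * ℓ (m + 3) + 6 ≤ 3 * ℓ (m + 4) := by
        have := mul_nonneg (by linarith : (0:ℤ) ≤ ℓ (m + 3) - 12)
          (by linarith : (0:ℤ) ≤ 3 * ℓ (m + 3) + 4)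
        linarith
      have hP4 : ℓ (m + 4) ^ 2 ≤ 4 * ℓ (m + 5) := by
        have hm2 := mul_nonneg hb0
          (by linarith : (0:ℤ) ≤ 3 * ℓ (m + 4) - 8 * ℓ (m + 3) - 6)
        linarith [hlower6, hc3b, hm2]
      have hmono : ℓ (m + 4) ≤ ℓ (m + 5) := by
        have := mul_nonneg hb0 (by linarith : (0:ℤ) ≤ ℓ (m + 4) - 4)
        linarith [hP4]
      have h44 : 4 ≤ m + 4 → ((m + 4 : ℕ) : ℤ) + 44 ≤ ℓ (m + 4) := by
        intro _
        rcases Nat.eq_zero_or_pos m with rfl | hm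
        · push_cast; norm_num [hl4]
        · have h := hc44 (by omega)
          have hb3c : 3 * ℓ (m + 3) ≤ ℓ (m + 4) := by
            have := mul_nonneg (by linarith : (0:ℤ) ≤ ℓ (m + 3) - 12)
              (by linarith : (0:ℤ) ≤ 3 * ℓ (m + 3))
            linarith
          push_cast at h ⊢
          omega
      have hKeyn : ∀ k, 2 ≤ k → (ℓ (m + 4)).toNat.choose (k + 1) ≤ (ℓ (m + 5)).toNat.choose k := by
        intro k hk
        apply choose_key
        · omega
        · omega
        · have hsq : ℓ (m + 4) ^ 2 * ℓ (m + 4) ^ 2 ≤ (4 * ℓ (m + 5)) * (4 * ℓ (m + 5)) :=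
            mul_le_mul hP4 hP4 (sq_nonneg _) (by linarith)
          have hint : ℓ (m + 4) ^ 3 ≤ ℓ (m + 5) ^ 2 := by
            linarith [hsq, mul_le_mul_of_nonneg_right hb16 (pow_nonneg hb0 3)]
          have : ((ℓ (m + 4)).toNat : ℤ) ^ 3 ≤ ((ℓ (m + 5)).toNat : ℤ) ^ 2 := by
            rw [e_b, e_a]; exact hint
          exact_mod_cast this
        · exact hk
      exact ⟨hb3, hmono, hupper, hP4, h44, hKeyn⟩

lemma facts : (∀ n, 3 ≤ ℓ n) ∧ (∀ n, ℓ n ≤ ℓ (n + 1)) ∧ (∀ n, 2 * ℓ (n + 1) ≤ ℓ n ^ 2) ∧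
    (∀ n : ℕ, (n : ℤ) ≤ ℓ n) ∧ ℓ 3 = 12 ∧ ℓ 4 = 48 ∧ (∀ n, 12 ≤ ℓ (n + 3)) ∧
    (∀ m, ℓ (m + 3) ^ 2 * (ℓ (m + 2) - 6) ≤ 2 * ℓ (m + 4) * ℓ (m + 2)) := by
  obtain ⟨hl1, hl2, hl3, hl4⟩ := vals ℓ h0 hrec
  have M := master ℓ h0 hrec
  have H1 : ∀ n, 3 ≤ ℓ n := fun n => (M n).1
  have H4 : ∀ n, ℓ n ≤ ℓ (n + 1) := fun n => (M n).2.1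
  have hmono : Monotone ℓ := monotone_nat_of_le_succ H4
  have H12 : ∀ n, 12 ≤ ℓ (n + 3) := by
    intro n
    calc (12 : ℤ) = ℓ 3 := hl3.symm
      _ ≤ ℓ (n + 3) := hmono (by omega)
  have H5 : ∀ n : ℕ, (n : ℤ) ≤ ℓ n := by
    intro n
    rcases le_or_gt n 3 with h | h
    · have := H1 n
      have : ((n : ℕ) : ℤ) ≤ 3 := by exact_mod_cast Int.ofNat_le.mpr h
      linarith [H1 n]
    · have := (M n).2.2.2.2.1 (by omega)
      linarith
  refine ⟨H1, H4, fun n => (M n).2.2.1, H5, hl3, hl4, H12, ?_⟩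
  intro m
  have hKey : ∀ m', m' + 1 ≤ m + 3 → ∀ k, 2 ≤ k →
      (ℓ m').toNat.choose (k + 1) ≤ (ℓ (m' + 1)).toNat.choose k :=
    fun m' _ => (M m').2.2.2.2.2
  obtain ⟨_, _, hlow⟩ := rec_bounds ℓ h0 hrec (m + 3) hKey
  have hlow' : 1 + ((ℓ (m + 3)).toNat.choose 2 : ℤ) - ((ℓ (m + 2)).toNat.choose 3 : ℤ)
      ≤ ℓ (m + 4) := hlow (m + 2) rfl
  have hc3 : 3 ≤ ℓ (m + 2) := H1 _
  have hb3 : 3 ≤ ℓ (m + 3) := H1 _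
  have e_b : ((ℓ (m + 3)).toNat : ℤ) = ℓ (m + 3) := Int.toNat_of_nonneg (by linarith)
  have e_c : ((ℓ (m + 2)).toNat : ℤ) = ℓ (m + 2) := Int.toNat_of_nonneg (by linarith)
  have h2b : 2 * (((ℓ (m + 3)).toNat.choose 2 : ℕ) : ℤ) = ℓ (m + 3) * (ℓ (m + 3) - 1) := by
    have hnat := two_mul_choose_two_s13 (ℓ (m + 3)).toNat
    have h1n : 1 ≤ (ℓ (m + 3)).toNat := by omega
    calc 2 * (((ℓ (m + 3)).toNat.choose 2 : ℕ) : ℤ)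
        = ((2 * (ℓ (m + 3)).toNat.choose 2 : ℕ) : ℤ) := by push_cast; ring
      _ = (((ℓ (m + 3)).toNat * ((ℓ (m + 3)).toNat - 1) : ℕ) : ℤ) := by rw [hnat]
      _ = ℓ (m + 3) * (ℓ (m + 3) - 1) := by
          rw [Nat.cast_mul, Nat.cast_sub h1n, e_b, Nat.cast_one]
  have h6c : 6 * (((ℓ (m + 2)).toNat.choose 3 : ℕ) : ℤ) ≤ ℓ (m + 2) ^ 3 := by
    have hnat := six_choose_three_le_s13 (ℓ (m + 2)).toNat
    calc 6 * (((ℓ (m + 2)).toNat.choose 3 : ℕ) : ℤ)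
        = ((6 * (ℓ (m + 2)).toNat.choose 3 : ℕ) : ℤ) := by push_cast; ring
      _ ≤ (((ℓ (m + 2)).toNat ^ 3 : ℕ) : ℤ) := by exact_mod_cast hnat
      _ = ℓ (m + 2) ^ 3 := by rw [Nat.cast_pow, e_c]
  have hc6 : 6 ≤ ℓ (m + 2) := by
    calc (6 : ℤ) = ℓ 2 := hl2.symm
      _ ≤ ℓ (m + 2) := hmono (by omega)
  have hc24b : ℓ (m + 2) ^ 2 ≤ 4 * ℓ (m + 3) := (M (m + 2)).2.2.2.1
  have hc0 : (0 : ℤ) ≤ ℓ (m + 2) := by linarith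
  have hb0 : (0 : ℤ) ≤ ℓ (m + 3) := by linarith
  have h6l : 6 + 3 * ℓ (m + 3) ^ 2 - 3 * ℓ (m + 3) - ℓ (m + 2) ^ 3 ≤ 6 * ℓ (m + 4) := by
    linarith [hlow', h2b, h6c]
  have hD := mul_le_mul_of_nonneg_right h6l hc0
  have hA : ℓ (m + 2) ^ 2 * ℓ (m + 2) ^ 2 ≤ (4 * ℓ (m + 3)) * (4 * ℓ (m + 3)) :=
    mul_le_mul hc24b hc24b (sq_nonneg _) (by linarith)
  have h6c2 : 6 * ℓ (m + 2) ≤ ℓ (m + 2) ^ 2 := by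
    have := mul_nonneg (by linarith : (0:ℤ) ≤ ℓ (m + 2) - 6) hc0
    linarith
  have hB := mul_le_mul_of_nonneg_left h6c2 hb0
  have hC := mul_le_mul_of_nonneg_left hc24b hb0
  linarith [hD, hA, hB, hC, hc6]

end Master

open Filter Topology

set_option maxHeartbeats 1000000 in
theorem ell_asymptotic (ℓ : ℕ → ℤ) (h0 : ℓ 0 = 3)
    (hrec : ∀ n : ℕ, ℓ (n + 1) =
      1 + ∑ j ∈ Finset.range (n + 1), (-1) ^ j * ((ℓ (n - j)).toNat.choose (j + 2) : ℤ)) :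
    ∃ ρ : ℝ, 0 < ρ ∧
      Tendsto (fun n : ℕ => (ℓ n : ℝ) / (2 * (2 : ℝ) ^ (ρ * 2 ^ n))) atTop (nhds 1) := by
  obtain ⟨H1, H4, H2, H5, hl3, hl4, H12, H3⟩ := facts ℓ h0 hrec
  have hmono : Monotone ℓ := monotone_nat_of_le_succ H4
  have hLpos : ∀ n, (0 : ℝ) < (ℓ n : ℝ) := by
    intro n
    have h3 : (3 : ℝ) ≤ (ℓ n : ℝ) := by exact_mod_cast H1 n
    linarith
  set z : ℕ → ℝ := fun n => Real.logb 2 (ℓ n : ℝ) - 1 with hzdef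
  set y : ℕ → ℝ := fun n => z n / 2 ^ n with hydef
  clear_value z y
  have hpow_pos : ∀ n : ℕ, (0 : ℝ) < 2 ^ n := fun n => pow_pos two_pos n
  have hzstep : ∀ n, z (n + 1) ≤ 2 * z n := by
    intro n
    have hle : ((ℓ (n + 1) : ℝ)) ≤ (ℓ n : ℝ) ^ 2 / 2 := by
      have h' : (2 : ℝ) * (ℓ (n + 1) : ℝ) ≤ (ℓ n : ℝ) ^ 2 := by exact_mod_cast H2 n
      linarith
    have h1 : Real.logb 2 (ℓ (n + 1) : ℝ) ≤ Real.logb 2 ((ℓ n : ℝ) ^ 2 / 2) :=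
      Real.logb_le_logb_of_le (by norm_num) (hLpos (n + 1)) hle
    have h2 : Real.logb 2 ((ℓ n : ℝ) ^ 2 / 2) = 2 * Real.logb 2 (ℓ n : ℝ) - 1 := by
      rw [Real.logb_div (pow_ne_zero 2 (ne_of_gt (hLpos n))) (by norm_num), Real.logb_pow,
        Real.logb_self_eq_one (by norm_num)]
      push_cast
      ring
    rw [h2] at h1
    simp only [hzdef]
    linarith
  have hyanti : ∀ n, y (n + 1) ≤ y n := by
    intro n
    simp only [hydef]
    rw [div_le_div_iff₀ (hpow_pos (n + 1)) (hpow_pos n)]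
    have h := mul_le_mul_of_nonneg_right (hzstep n) (le_of_lt (hpow_pos n))
    have he : (2 : ℝ) ^ (n + 1) = 2 * 2 ^ n := by ring
    rw [he]
    nlinarith [h]
  have hy_antitone : Antitone y := antitone_nat_of_succ_le hyanti
  have hstep : ∀ p : ℕ, y (p + 4) - y (p + 5) ≤ 24 / ((ℓ (p + 3) : ℝ) * 2 ^ (p + 5)) := by
    intro p
    have hc12 : (12 : ℝ) ≤ (ℓ (p + 3) : ℝ) := by exact_mod_cast H12 p
    have hcpos : (0 : ℝ) < (ℓ (p + 3) : ℝ) := hLpos _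
    have hbpos : (0 : ℝ) < (ℓ (p + 4) : ℝ) := hLpos _
    have hl5pos : (0 : ℝ) < (ℓ (p + 5) : ℝ) := hLpos _
    have hcne : (ℓ (p + 3) : ℝ) ≠ 0 := ne_of_gt hcpos
    set ε : ℝ := 6 / (ℓ (p + 3) : ℝ) with hedef
    have hε_pos : 0 < ε := by rw [hedef]; exact div_pos (by norm_num) hcpos
    have hε_le : ε ≤ 1 / 2 := by
      rw [hedef, div_le_iff₀ hcpos]; linarith
    have hhalf : (0 : ℝ) < 1 - ε := by linarith
    have hI3R : ((ℓ (p + 4) : ℝ)) ^ 2 * ((ℓ (p + 3) : ℝ) - 6) ≤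
        2 * (ℓ (p + 5) : ℝ) * (ℓ (p + 3) : ℝ) := by exact_mod_cast H3 (p + 1)
    have hlb : ((ℓ (p + 4) : ℝ)) ^ 2 / 2 * (1 - ε) ≤ (ℓ (p + 5) : ℝ) := by
      have e : ((ℓ (p + 4) : ℝ)) ^ 2 / 2 * (1 - ε)
          = ((ℓ (p + 4) : ℝ)) ^ 2 * ((ℓ (p + 3) : ℝ) - 6) / (2 * (ℓ (p + 3) : ℝ)) := by
        rw [hedef]; field_simp; try ring
      rw [e, div_le_iff₀ (mul_pos two_pos hcpos)]
      nlinarith [hI3R]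
    have hlogb : -(4 * ε) ≤ Real.logb 2 (1 - ε) := by
      have h1 : Real.log (1 / (1 - ε)) ≤ 1 / (1 - ε) - 1 :=
        Real.log_le_sub_one_of_pos (one_div_pos.mpr hhalf)
      have h2 : 1 / (1 - ε) - 1 = ε / (1 - ε) := by field_simp; ring
      have h3 : ε / (1 - ε) ≤ 2 * ε := by
        rw [div_le_iff₀ hhalf]; nlinarith
      have h4 : Real.log (1 - ε) = -Real.log (1 / (1 - ε)) := by
        rw [one_div, Real.log_inv, neg_neg]
      have hlog2 : (1 / 2 : ℝ) ≤ Real.log 2 := by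
        have := Real.log_two_gt_d9; linarith
      have hlog2pos : (0 : ℝ) < Real.log 2 := by linarith
      rw [Real.logb, le_div_iff₀ hlog2pos]
      nlinarith
    have hz5 : 2 * z (p + 4) - 24 / (ℓ (p + 3) : ℝ) ≤ z (p + 5) := by
      have hlog_le : Real.logb 2 ((ℓ (p + 4) : ℝ) ^ 2 / 2 * (1 - ε)) ≤
          Real.logb 2 (ℓ (p + 5) : ℝ) :=
        Real.logb_le_logb_of_le (by norm_num)
          (mul_pos (div_pos (pow_pos hbpos 2) two_pos) hhalf) hlb
      have hsplit : Real.logb 2 ((ℓ (p + 4) : ℝ) ^ 2 / 2 * (1 - ε))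
          = 2 * Real.logb 2 (ℓ (p + 4) : ℝ) - 1 + Real.logb 2 (1 - ε) := by
        rw [Real.logb_mul (ne_of_gt (div_pos (pow_pos hbpos 2) two_pos)) (by linarith),
          Real.logb_div (pow_ne_zero 2 (ne_of_gt hbpos)) (by norm_num), Real.logb_pow,
          Real.logb_self_eq_one (by norm_num)]
        push_cast
        ring
      have h4e : 4 * ε = 24 / (ℓ (p + 3) : ℝ) := by
        rw [hedef]; field_simp; ring
      rw [hsplit] at hlog_le
      simp only [hzdef]
      linarith [hlogb, hlog_le, h4e]
    simp only [hydef]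
    have hqe : (2 : ℝ) ^ (p + 5) = 2 * 2 ^ (p + 4) := by ring
    have h2e : z (p + 4) / 2 ^ (p + 4) - z (p + 5) / 2 ^ (p + 5)
        = (2 * z (p + 4) - z (p + 5)) / 2 ^ (p + 5) := by
      rw [hqe]
      field_simp
    rw [h2e, ← div_div, div_le_div_iff_of_pos_right (hpow_pos (p + 5))]
    linarith [hz5]
  have hT : ∀ p k : ℕ, y (p + 4) - y (p + k + 4) ≤
      24 / (ℓ (p + 3) : ℝ) * (1 / 2 ^ (p + 4) - 1 / 2 ^ (p + k + 4)) := by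
    intro p k
    induction k with
    | zero => simp
    | succ k ihk =>
      show y (p + 4) - y (p + k + 5) ≤
        24 / (ℓ (p + 3) : ℝ) * (1 / 2 ^ (p + 4) - 1 / 2 ^ (p + k + 5))
      have hs := hstep (p + k)
      have hs2 : y (p + k + 4) - y (p + k + 5) ≤ 24 / ((ℓ (p + 3) : ℝ) * 2 ^ (p + k + 5)) := by
        refine le_trans hs (div_le_div_of_nonneg_left (by norm_num)
          (mul_pos (hLpos (p + 3)) (hpow_pos (p + k + 5))) ?_)
        have hm : (ℓ (p + 3) : ℝ) ≤ (ℓ (p + k + 3) : ℝ) := by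
          exact_mod_cast hmono (by omega : p + 3 ≤ p + k + 3)
        exact mul_le_mul_of_nonneg_right hm (le_of_lt (hpow_pos _))
      have halg : 24 / (ℓ (p + 3) : ℝ) * (1 / 2 ^ (p + 4) - 1 / 2 ^ (p + k + 4))
          + 24 / ((ℓ (p + 3) : ℝ) * 2 ^ (p + k + 5))
          = 24 / (ℓ (p + 3) : ℝ) * (1 / 2 ^ (p + 4) - 1 / 2 ^ (p + k + 5)) := by
        have e2 : (2 : ℝ) ^ (p + k + 5) = 2 ^ (p + k + 4) * 2 := pow_succ 2 (p + k + 4)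
        have hcne : (ℓ (p + 3) : ℝ) ≠ 0 := ne_of_gt (hLpos _)
        rw [e2]
        field_simp
        ring
      linarith [ihk, hs2]
  have hT' : ∀ p k : ℕ, y (p + 4) - y (p + k + 4) ≤ 24 / ((ℓ (p + 3) : ℝ) * 2 ^ (p + 4)) := by
    intro p k
    have h := hT p k
    have hnn : (0 : ℝ) ≤ 24 / (ℓ (p + 3) : ℝ) := le_of_lt (div_pos (by norm_num) (hLpos _))
    have hsub : (1 / 2 ^ (p + 4) - 1 / 2 ^ (p + k + 4) : ℝ) ≤ 1 / 2 ^ (p + 4) := by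
      have := le_of_lt (one_div_pos.mpr (hpow_pos (p + k + 4)))
      linarith
    have h2 := mul_le_mul_of_nonneg_left hsub hnn
    have he : 24 / (ℓ (p + 3) : ℝ) * (1 / 2 ^ (p + 4)) = 24 / ((ℓ (p + 3) : ℝ) * 2 ^ (p + 4)) := by
      rw [div_mul_div_comm, mul_one]
    linarith
  have hbdd : BddBelow (Set.range y) := by
    refine ⟨y 4 - 24 / ((ℓ 3 : ℝ) * 2 ^ 4), ?_⟩
    rintro w ⟨n, rfl⟩
    have hnn : (0 : ℝ) ≤ 24 / ((ℓ 3 : ℝ) * 2 ^ 4) :=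
      le_of_lt (div_pos (by norm_num) (mul_pos (hLpos 3) (by norm_num)))
    rcases le_or_gt n 4 with h | h
    · have := hy_antitone h
      linarith
    · obtain ⟨k, rfl⟩ : ∃ k, n = 0 + k + 4 := ⟨n - 4, by omega⟩
      have h2 := hT' 0 k
      simp only [Nat.zero_add] at h2 ⊢
      linarith
  set ρ : ℝ := ⨅ n, y n with hρdef
  clear_value ρ
  have hy_tendsto : Tendsto y atTop (𝓝 ρ) := hρdef ▸ tendsto_atTop_ciInf hy_antitone hbdd
  have hρ_le : ∀ n, ρ ≤ y n := fun n => hρdef ▸ ciInf_le hbdd n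
  have hgap : ∀ p, y (p + 4) - ρ ≤ 24 / ((ℓ (p + 3) : ℝ) * 2 ^ (p + 4)) := by
    intro p
    have h1 : Tendsto (fun k : ℕ => k + (p + 4)) atTop atTop := tendsto_add_atTop_nat (p + 4)
    have hlim : Tendsto (fun k => y (p + k + 4)) atTop (𝓝 ρ) :=
      (hy_tendsto.comp h1).congr (fun k => congrArg y (by omega))
    have hev : ∀ k, y (p + 4) - 24 / ((ℓ (p + 3) : ℝ) * 2 ^ (p + 4)) ≤ y (p + k + 4) :=
      fun k => by linarith [hT' p k]
    have := ge_of_tendsto' hlim hev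
    linarith
  have hρpos : 0 < ρ := by
    have hl4R : (ℓ 4 : ℝ) = 48 := by rw [hl4]; norm_num
    have hlogb48 : (5 : ℝ) ≤ Real.logb 2 (ℓ 4 : ℝ) := by
      have h32 : Real.logb 2 ((2 : ℝ) ^ (5 : ℕ)) = 5 := by
        rw [Real.logb_pow, Real.logb_self_eq_one (by norm_num)]
        norm_num
      have hle : ((2 : ℝ) ^ (5 : ℕ)) ≤ (ℓ 4 : ℝ) := by rw [hl4R]; norm_num
      have := Real.logb_le_logb_of_le (by norm_num : (1:ℝ) < 2) (by norm_num) hle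
      linarith
    have hy4 : (1 / 4 : ℝ) ≤ y 4 := by
      simp only [hydef, hzdef]
      rw [le_div_iff₀ (hpow_pos 4)]
      norm_num
      linarith
    have h2 := hgap 0
    simp only [Nat.zero_add] at h2
    have h12 : (ℓ 3 : ℝ) = 12 := by rw [hl3]; norm_num
    rw [h12] at h2
    norm_num at h2
    linarith
  refine ⟨ρ, hρpos, ?_⟩
  have hzy : ∀ n, z n = y n * 2 ^ n := by
    intro n
    simp only [hydef]
    field_simp
  have hw_lb : ∀ n, 0 ≤ z n - ρ * 2 ^ n := by
    intro n
    have h := mul_le_mul_of_nonneg_right (hρ_le n) (le_of_lt (hpow_pos n))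
    have h2 := hzy n
    linarith
  have hw_ub : ∀ p : ℕ, z (p + 4) - ρ * 2 ^ (p + 4) ≤ 24 / (ℓ (p + 3) : ℝ) := by
    intro p
    have h := mul_le_mul_of_nonneg_right (hgap p) (le_of_lt (hpow_pos (p + 4)))
    have he : 24 / ((ℓ (p + 3) : ℝ) * 2 ^ (p + 4)) * 2 ^ (p + 4) = 24 / (ℓ (p + 3) : ℝ) := by
      rw [div_mul_eq_mul_div, mul_comm ((ℓ (p + 3) : ℝ)) (2 ^ (p + 4)), ← div_div,
        mul_div_assoc, div_self (ne_of_gt (hpow_pos (p + 4))), mul_one]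
    have h2 := hzy (p + 4)
    linarith [h, he, h2]
  have hglim : Tendsto (fun n : ℕ => 24 / ((ℓ (n - 1) : ℤ) : ℝ)) atTop (𝓝 0) := by
    apply Tendsto.div_atTop tendsto_const_nhds
    apply tendsto_atTop_mono ?_ (tendsto_natCast_atTop_atTop.comp (tendsto_sub_atTop_nat 1))
    intro n
    simp only [Function.comp_apply]
    exact_mod_cast H5 (n - 1)
  have hw_tendsto : Tendsto (fun n => z n - ρ * 2 ^ n) atTop (𝓝 0) := by
    refine tendsto_of_tendsto_of_tendsto_of_le_of_le' tendsto_const_nhds hglim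
      (Eventually.of_forall hw_lb) ?_
    filter_upwards [eventually_ge_atTop 4] with n hn
    obtain ⟨p, rfl⟩ : ∃ p, n = p + 4 := ⟨n - 4, by omega⟩
    exact hw_ub p
  have hfinal0 : Tendsto (fun n : ℕ => (2 : ℝ) ^ (z n - ρ * 2 ^ n)) atTop
      (𝓝 ((2 : ℝ) ^ (0 : ℝ))) :=
    Filter.Tendsto.rpow tendsto_const_nhds hw_tendsto (Or.inl (by norm_num))
  rw [Real.rpow_zero] at hfinal0
  refine hfinal0.congr ?_
  intro n
  show (2 : ℝ) ^ (z n - ρ * 2 ^ n) = (ℓ n : ℝ) / (2 * (2 : ℝ) ^ (ρ * 2 ^ n))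
  rw [Real.rpow_sub two_pos]
  simp only [hzdef]
  rw [Real.rpow_sub two_pos, Real.rpow_logb two_pos (by norm_num) (hLpos n), Real.rpow_one,
    div_div]
end
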